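/- Let P be an n×n complex matrix polynomial of degree d, let ℓ ≥ 1 divide d with k = d/ℓ, and let ℒ(λ) be an (ε,n,η,n)-block Kronecker ℓ-ification of P built from a solution M(λ) of (Λ_η(λ^ℓ)^T ⊗ I_n) M(λ) (Λ_ε(λ^ℓ) ⊗ I_n) = P(λ). Then the left-sided factorizations H(λ; η, ε, M^T)^T · ℒ(λ) = e_{ε+1}^T ⊗ P(λ) and G(λ; η, ε, M^T)^T · ℒ(λ) = e_1^T ⊗ P(λ) hold as identities of matrix polynomials, i.e., viewing each n×kn product as a row of k blocks of size n×n, in the first identity the (ε+1)-st block equals P(λ) and all others are 0, and in the second identity the first block equals P(λ) and all others are 0. Here M^T denotes the entrywise transpose of M(λ). -/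

import Mathlib

open Matrix BigOperators

noncomputable section

/-- Evaluation at `x` of the matrix polynomial with coefficients `C 0, …, C N`. -/
def mpEval {α β : Type*} (N : ℕ) (C : ℕ → Matrix α β ℂ) (x : ℂ) : Matrix α β ℂ :=
  ∑ i ∈ Finset.range (N + 1), x ^ i • C i

/-- Entrywise derivative of the matrix polynomial, evaluated at `x`. -/
def mpDer {α β : Type*} (N : ℕ) (C : ℕ → Matrix α β ℂ) (x : ℂ) : Matrix α β ℂ :=
  ∑ i ∈ Finset.range (N + 1), ((i : ℂ) * x ^ (i - 1)) • C i

/-- Spectral norm (operator 2-norm, i.e. largest singular value) of a complex matrix. -/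
def sNorm {α β : Type*} [Fintype α] [Fintype β] [DecidableEq β] (A : Matrix α β ℂ) : ℝ :=
  ‖LinearMap.toContinuousLinearMap (Matrix.toEuclideanLin A)‖

/-- Euclidean norm of a complex vector. -/
def vNorm {α : Type*} [Fintype α] (v : α → ℂ) : ℝ :=
  Real.sqrt (∑ i, ‖v i‖ ^ 2)

/-- `Λ_k(x^ℓ) ⊗ I_n`, a `(k+1)n × n` matrix whose `i`-th (0-based) `n × n` block is
`x^(ℓ(k−i)) I_n`. -/
def LamI (n k l : ℕ) (x : ℂ) : Matrix (Fin (k + 1) × Fin n) (Fin n) ℂ :=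
  Matrix.of fun p s => if p.2 = s then x ^ (l * (k - (p.1 : ℕ))) else 0

/-- `L_k(x^ℓ) ⊗ I_n`, a `kn × (k+1)n` matrix. -/
def LkI (n k l : ℕ) (x : ℂ) : Matrix (Fin k × Fin n) (Fin (k + 1) × Fin n) ℂ :=
  Matrix.of fun p q =>
    if p.2 = q.2 then
      if (q.1 : ℕ) = (p.1 : ℕ) then -1
      else if (q.1 : ℕ) = (p.1 : ℕ) + 1 then x ^ l else 0
    else 0

/-- The degree-`0` coefficient of `L_k(λ^ℓ) ⊗ I_n`. -/
def LkI0 (n k : ℕ) : Matrix (Fin k × Fin n) (Fin (k + 1) × Fin n) ℂ :=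
  Matrix.of fun p q => if p.2 = q.2 ∧ (q.1 : ℕ) = (p.1 : ℕ) then -1 else 0

/-- The degree-`ℓ` coefficient of `L_k(λ^ℓ) ⊗ I_n`. -/
def LkI1 (n k : ℕ) : Matrix (Fin k × Fin n) (Fin (k + 1) × Fin n) ℂ :=
  Matrix.of fun p q => if p.2 = q.2 ∧ (q.1 : ℕ) = (p.1 : ℕ) + 1 then 1 else 0

/-- `R_k(x^ℓ)`: `n × n` blocks `x^(ℓ(i−j)) I_n` for `j ≤ i` (0-based), `0` otherwise. -/
def Rmat (n k l : ℕ) (x : ℂ) : Matrix (Fin k × Fin n) (Fin (k + 1) × Fin n) ℂ :=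
  Matrix.of fun p q =>
    if p.2 = q.2 ∧ (q.1 : ℕ) ≤ (p.1 : ℕ) then x ^ (l * ((p.1 : ℕ) - (q.1 : ℕ))) else 0

/-- `S_k(x^ℓ)`: `n × n` blocks `x^(ℓ(k+i−j)) I_n` for `i < j` (0-based), `0` otherwise. -/
def Smat (n k l : ℕ) (x : ℂ) : Matrix (Fin k × Fin n) (Fin (k + 1) × Fin n) ℂ :=
  Matrix.of fun p q =>
    if p.2 = q.2 ∧ (p.1 : ℕ) < (q.1 : ℕ) then x ^ (l * (k + (p.1 : ℕ) - (q.1 : ℕ))) else 0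

/-- The block column `H(x; p, q, N) = [Λ_p(x^ℓ) ⊗ I_n ; R_q(x^ℓ) N(x) (Λ_p(x^ℓ) ⊗ I_n)]`. -/
def Hmat (n l p q : ℕ) (N : ℂ → Matrix (Fin (q + 1) × Fin n) (Fin (p + 1) × Fin n) ℂ)
    (x : ℂ) : Matrix ((Fin (p + 1) × Fin n) ⊕ (Fin q × Fin n)) (Fin n) ℂ :=
  Matrix.of fun r c =>
    Sum.elim (fun a => LamI n p l x a c)
      (fun a => (Rmat n q l x * (N x * LamI n p l x)) a c) r

/-- The block column `G(x; p, q, N) = [x^(qℓ)(Λ_p(x^ℓ) ⊗ I_n) ; −S_q(x^ℓ) N(x) (Λ_p(x^ℓ) ⊗ I_n)]`. -/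
def Gmat (n l p q : ℕ) (N : ℂ → Matrix (Fin (q + 1) × Fin n) (Fin (p + 1) × Fin n) ℂ)
    (x : ℂ) : Matrix ((Fin (p + 1) × Fin n) ⊕ (Fin q × Fin n)) (Fin n) ℂ :=
  Matrix.of fun r c =>
    Sum.elim (fun a => x ^ (q * l) * LamI n p l x a c)
      (fun a => (-(Smat n q l x * (N x * LamI n p l x))) a c) r

/-- Coefficients of the `(ε,n,η,n)`-block Kronecker `ℓ`-ification
`ℒ(λ) = [[M(λ), L_η(λ^ℓ)ᵀ ⊗ I_n], [L_ε(λ^ℓ) ⊗ I_n, 0]]`. -/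
def LcalCoef (n l ε η : ℕ)
    (M : ℕ → Matrix (Fin (η + 1) × Fin n) (Fin (ε + 1) × Fin n) ℂ) (i : ℕ) :
    Matrix ((Fin (η + 1) × Fin n) ⊕ (Fin ε × Fin n))
      ((Fin (ε + 1) × Fin n) ⊕ (Fin η × Fin n)) ℂ :=
  Matrix.fromBlocks (M i)
    (if i = 0 then (LkI0 n η)ᵀ else if i = l then (LkI1 n η)ᵀ else 0)
    (if i = 0 then LkI0 n ε else if i = l then LkI1 n ε else 0) 0

/-- `det P(λ)` as a scalar polynomial, where `P(λ) = Σ_{i=0}^d A_i λ^i`. -/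
def detPoly (n d : ℕ) (A : ℕ → Matrix (Fin n) (Fin n) ℂ) : Polynomial ℂ :=
  (∑ i ∈ Finset.range (d + 1), (Polynomial.X : Polynomial ℂ) ^ i • (A i).map Polynomial.C).det

/-- The horizontal concatenation `[A_0 A_1 ⋯ A_d]`. -/
def rowConcat (n d : ℕ) (A : ℕ → Matrix (Fin n) (Fin n) ℂ) :
    Matrix (Fin n) (Fin (d + 1) × Fin n) ℂ :=
  Matrix.of fun r q => A (q.1 : ℕ) r q.2

/-- Coefficientwise eigenvalue condition number of `Q(λ) = Σ_{i=0}^N C_i λ^i` at the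
eigentriple `(v, x0, u)`. -/
def coeffCond {α β : Type*} [Fintype α] [Fintype β] [DecidableEq β] (N : ℕ)
    (C : ℕ → Matrix α β ℂ) (x0 : ℂ) (u : β → ℂ) (v : α → ℂ) : ℝ :=
  (∑ i ∈ Finset.range (N + 1), ‖x0‖ ^ i * sNorm (C i)) * vNorm u * vNorm v /
    (‖x0‖ * ‖dotProduct (star v) ((mpDer N C x0).mulVec u)‖)

/-- Normwise eigenvalue condition number of `P(λ) = Σ_{i=0}^d A_i λ^i` at `(y, x0, x)`. -/
def normCond (n d : ℕ) (A : ℕ → Matrix (Fin n) (Fin n) ℂ) (x0 : ℂ)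
    (x y : Fin n → ℂ) : ℝ :=
  sNorm (rowConcat n d A) * (∑ i ∈ Finset.range (d + 1), ‖x0‖ ^ i) *
      vNorm x * vNorm y /
    (‖x0‖ * ‖dotProduct (star y) ((mpDer d A x0).mulVec x)‖)

/-- Each `n × n` block of each coefficient `M_t`, `t = 0, …, ℓ`, is `0`, `I_n`,
or one of the coefficients `A_s` of `P`.  -/
def IsCompanionM (n d l ε η : ℕ) (A : ℕ → Matrix (Fin n) (Fin n) ℂ)
    (M : ℕ → Matrix (Fin (η + 1) × Fin n) (Fin (ε + 1) × Fin n) ℂ) : Prop :=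
  ∀ t ≤ l, ∀ (i : Fin (η + 1)) (j : Fin (ε + 1)),
    (Matrix.of fun r s => M t (i, r) (j, s)) = 0 ∨
    (Matrix.of fun r s => M t (i, r) (j, s)) = (1 : Matrix (Fin n) (Fin n) ℂ) ∨
    ∃ s ≤ d, (Matrix.of fun r s' => M t (i, r) (j, s')) = A s



-- ===== auxiliary lemmas =====

lemma spike (N : ℕ) (f : ℕ → ℂ) (a : ℕ) :
    ∑ i ∈ Finset.range N, (if i = a then f i else 0) = if a < N then f a else 0 := by
  simp [Finset.sum_ite_eq', Finset.mem_range]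

lemma mul_succ_pow (x : ℂ) (l a b : ℕ) (h : a + 1 = b) :
    x ^ (l * a) * x ^ l = x ^ (l * b) := by
  rw [← pow_add, ← h, Nat.mul_succ]

lemma key0 (x : ℂ) (l k j : ℕ) (hj : j < k) :
    ∑ i ∈ Finset.range (k+1),
      (if i = j then -1 * x ^ (l * (k - i)) else if i = j + 1 then x ^ l * x ^ (l * (k - i)) else 0) = 0 := by
  have h : ∀ i ∈ Finset.range (k+1),
      (if i = j then -1 * x ^ (l * (k - i)) else if i = j + 1 then x ^ l * x ^ (l * (k - i)) else 0)
      = (if i = j then -1 * x ^ (l*(k-i)) else 0) + (if i = j+1 then x^l * x^(l*(k-i)) else 0) := by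
    intro i _
    split_ifs <;> first | (exfalso; omega) | ring
  rw [Finset.sum_congr rfl h, Finset.sum_add_distrib, spike, spike,
    if_pos (by omega : j < k+1), if_pos (by omega : j+1 < k+1)]
  linear_combination mul_succ_pow x l (k-(j+1)) (k-j) (by omega)

lemma keyH (x : ℂ) (l ε j m : ℕ) (hj : j ≤ ε) (hm : m ≤ ε) :
    ((if j = m then (1:ℂ) else 0)
      + ∑ i ∈ Finset.range ε,
          (if j ≤ i then x ^ (l*(i-j)) else 0)
            * (if m = i then (-1:ℂ) else if m = i+1 then x ^ l else 0))
    = if m = ε then x ^ (l*(ε-j)) else 0 := by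
  have h : ∀ i ∈ Finset.range ε,
      (if j ≤ i then x ^ (l*(i-j)) else 0) * (if m = i then (-1:ℂ) else if m = i+1 then x ^ l else 0)
      = (if i = m then (if j ≤ i then x ^ (l*(i-j)) else 0) * (-1) else 0)
        + (if i = m - 1 then (if j ≤ i then x ^ (l*(i-j)) else 0) * (if m = i+1 then x ^ l else 0) else 0) := by
    intro i _
    split_ifs <;> first | (exfalso; omega) | ring
  rw [Finset.sum_congr rfl h, Finset.sum_add_distrib, spike, spike]
  by_cases hme : m = ε
  · rw [if_pos hme, if_neg (by omega : ¬ m < ε)]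
    by_cases hje : j = m
    · rw [if_pos hje]
      have he : l * (ε - j) = 0 := by
        have : ε - j = 0 := by omega
        rw [this, Nat.mul_zero]
      rw [he, pow_zero]
      rcases Nat.eq_zero_or_pos ε with rfl | he1
      · rw [if_neg (by omega : ¬ m - 1 < 0)]; ring
      · rw [if_pos (by omega : m - 1 < ε), if_neg (by omega : ¬ j ≤ m - 1)]; ring
    · rw [if_neg hje, if_pos (by omega : m - 1 < ε), if_pos (by omega : j ≤ m - 1),
        if_pos (by omega : m = m - 1 + 1)]
      rw [mul_succ_pow x l (m-1-j) (ε-j) (by omega)]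
      ring
  · rw [if_neg hme, if_pos (by omega : m < ε)]
    by_cases hje : j = m
    · rw [if_pos hje, if_pos (by omega : j ≤ m)]
      have he : l * (m - j) = 0 := by
        have : m - j = 0 := by omega
        rw [this, Nat.mul_zero]
      rw [he, pow_zero, if_pos (by omega : m - 1 < ε)]
      rcases Nat.eq_zero_or_pos m with rfl | hm1
      · rw [if_neg (by omega : ¬ (0:ℕ) = 0 - 1 + 1)]; ring
      · rw [if_neg (by omega : ¬ j ≤ m - 1)]; ring
    · by_cases hjm : j < m
      · rw [if_neg hje, if_pos (by omega : j ≤ m), if_pos (by omega : m - 1 < ε),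
          if_pos (by omega : j ≤ m - 1), if_pos (by omega : m = m - 1 + 1)]
        rw [mul_succ_pow x l (m-1-j) (m-j) (by omega)]
        ring
      · rw [if_neg hje, if_neg (by omega : ¬ j ≤ m), if_pos (by omega : m - 1 < ε),
          if_neg (by omega : ¬ j ≤ m - 1)]
        ring

lemma keyG (x : ℂ) (l ε j m : ℕ) (hj : j ≤ ε) (hm : m ≤ ε) :
    (x ^ (ε * l) * (if j = m then (1:ℂ) else 0)
      - ∑ i ∈ Finset.range ε,
          (if i < j then x ^ (l*(ε+i-j)) else 0)
            * (if m = i then (-1:ℂ) else if m = i+1 then x ^ l else 0))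
    = if m = 0 then x ^ (l*(ε-j)) else 0 := by
  have h : ∀ i ∈ Finset.range ε,
      (if i < j then x ^ (l*(ε+i-j)) else 0) * (if m = i then (-1:ℂ) else if m = i+1 then x ^ l else 0)
      = (if i = m then (if i < j then x ^ (l*(ε+i-j)) else 0) * (-1) else 0)
        + (if i = m - 1 then (if i < j then x ^ (l*(ε+i-j)) else 0) * (if m = i+1 then x ^ l else 0) else 0) := by
    intro i _
    split_ifs <;> first | (exfalso; omega) | ring
  rw [Finset.sum_congr rfl h, Finset.sum_add_distrib, spike, spike]
  rcases Nat.eq_zero_or_pos m with rfl | hm1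
  · rw [if_pos rfl]
    rcases Nat.eq_zero_or_pos j with rfl | hj1
    · have he : l * (ε - 0) = ε * l := by rw [Nat.sub_zero, Nat.mul_comm]
      rw [he, if_pos rfl]
      rcases Nat.eq_zero_or_pos ε with rfl | he1
      · rw [if_neg (by omega : ¬ (0:ℕ) < 0), if_neg (by omega : ¬ (0:ℕ) - 1 < 0)]; ring
      · rw [if_pos he1, if_neg (lt_irrefl 0), if_pos (by omega : (0:ℕ) - 1 < ε)]
        ring
    · have hee : 0 < ε := by omega
      rw [if_neg (by omega : ¬ j = 0), if_pos hee, if_pos hj1, if_pos (by omega : (0:ℕ) - 1 < ε),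
        if_neg (by omega : ¬ (0:ℕ) = 0 - 1 + 1)]
      have he : l * (ε + 0 - j) = l * (ε - j) := by
        congr 1 <;> omega
      rw [he]
      ring
  · rw [if_neg (by omega : ¬ m = 0)]
    by_cases hje : j = m
    · rw [if_pos hje, if_pos (by omega : m - 1 < ε), if_pos (by omega : m - 1 < j),
        if_pos (by omega : m = m - 1 + 1)]
      have he : l * (ε + (m-1) - j) = l * (ε - 1) := by congr 1 <;> omega
      rw [he, mul_succ_pow x l (ε-1) ε (by omega), Nat.mul_comm]
      by_cases hme : m < ε
      · rw [if_pos hme, if_neg (by omega : ¬ m < j)]; ring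
      · rw [if_neg hme]; ring
    · by_cases hjm : m < j
      · rw [if_neg hje, if_pos (by omega : m < ε), if_pos hjm, if_pos (by omega : m - 1 < ε),
          if_pos (by omega : m - 1 < j), if_pos (by omega : m = m - 1 + 1)]
        have he : l * (ε + (m-1) - j) = l * (ε + m - j - 1) := by congr 1 <;> omega
        rw [he, mul_succ_pow x l (ε + m - j - 1) (ε + m - j) (by omega)]
        ring
      · rw [if_neg hje, if_neg (by omega : ¬ m < j), if_pos (by omega : m - 1 < ε),
          if_neg (by omega : ¬ m - 1 < j)]
        by_cases hme : m < ε
        · rw [if_pos hme]; ring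
        · rw [if_neg hme]; ring

lemma keyH' (x : ℂ) (l ε j m : ℕ) (hj : j ≤ ε) (hm : m ≤ ε) :
    ((if j = m then (1:ℂ) else 0)
      + ∑ i ∈ Finset.range ε,
          (if m = i then (if j ≤ i then x ^ (l*(i-j)) * (-1) else 0)
            else if m = i+1 then (if j ≤ i then x ^ (l*(i-j)) * x ^ l else 0) else 0))
    = if m = ε then x ^ (l*(ε-j)) else 0 := by
  rw [← keyH x l ε j m hj hm]
  congr 1
  refine Finset.sum_congr rfl fun i _ => ?_
  split_ifs <;> ring

lemma keyG' (x : ℂ) (l ε j m : ℕ) (hj : j ≤ ε) (hm : m ≤ ε) :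
    (x ^ (ε * l) * (if j = m then (1:ℂ) else 0)
      - ∑ i ∈ Finset.range ε,
          (if m = i then (if i < j then x ^ (l*(ε+i-j)) * (-1) else 0)
            else if m = i+1 then (if i < j then x ^ (l*(ε+i-j)) * x ^ l else 0) else 0))
    = if m = 0 then x ^ (l*(ε-j)) else 0 := by
  rw [← keyG x l ε j m hj hm]
  congr 1
  refine Finset.sum_congr rfl fun i _ => ?_
  split_ifs <;> ring

lemma LkI_mul_LamI (n k l : ℕ) (x : ℂ) : LkI n k l x * LamI n k l x = 0 := by
  ext ⟨p1, p2⟩ c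
  simp only [Matrix.mul_apply, LkI, LamI, Matrix.of_apply, Matrix.zero_apply]
  rw [Fintype.sum_prod_type]
  simp only [ite_mul, zero_mul, mul_ite, mul_zero]
  simp only [Finset.sum_ite_eq', Finset.mem_univ, if_true, ite_true]
  by_cases h : p2 = c
  · subst h
    simp only [if_pos rfl]
    simp only [if_true]
    rw [Fin.sum_univ_eq_sum_range
      (fun i => if i = (p1:ℕ) then -1 * x ^ (l * (k - i))
        else if i = (p1:ℕ) + 1 then x ^ l * x ^ (l * (k - i)) else 0) (k+1)]
    exact key0 x l k p1 p1.isLt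
  · simp [h]

def Qlast (n ε : ℕ) : Matrix (Fin n) (Fin (ε+1) × Fin n) ℂ :=
  Matrix.of fun s q => if q.1 = Fin.last ε ∧ q.2 = s then 1 else 0

def Q0 (n ε : ℕ) : Matrix (Fin n) (Fin (ε+1) × Fin n) ℂ :=
  Matrix.of fun s q => if q.1 = (0 : Fin (ε+1)) ∧ q.2 = s then 1 else 0

lemma oneAddRL (n l ε : ℕ) (x : ℂ) :
    (1 : Matrix (Fin (ε+1) × Fin n) (Fin (ε+1) × Fin n) ℂ) + (Rmat n ε l x)ᵀ * LkI n ε l x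
      = LamI n ε l x * Qlast n ε := by
  ext ⟨p1, p2⟩ ⟨q1, q2⟩
  simp only [Matrix.add_apply, Matrix.one_apply, Matrix.mul_apply, Matrix.transpose_apply,
    Rmat, LkI, LamI, Qlast, Matrix.of_apply]
  rw [Fintype.sum_prod_type]
  simp only [ite_and, ite_mul, zero_mul, mul_ite, mul_zero, mul_one]
  simp only [Finset.sum_ite_eq', Finset.sum_ite_eq, Finset.mem_univ]
  simp only [if_true]
  by_cases hpq : q2 = p2
  · subst hpq
    simp only [if_pos rfl]
    have hR : (∑ s : Fin n,
        if q1 = Fin.last ε then (if q2 = s then (if q2 = s then x ^ (l * (ε - ↑p1)) else 0) else 0) else 0)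
        = if (q1:ℕ) = ε then x ^ (l * (ε - ↑p1)) else 0 := by
      by_cases hq : q1 = Fin.last ε
      · rw [if_pos (by rw [hq, Fin.val_last])]
        simp [hq, Finset.sum_ite_eq]
      · rw [if_neg (by intro h; exact hq (Fin.ext (by rw [h, Fin.val_last])))]
        simp [hq]
    rw [hR]
    simp only [if_true, ite_true]
    simp only [Prod.mk.injEq, and_true, Fin.ext_iff]
    rw [Fin.sum_univ_eq_sum_range
      (fun i => if (q1:ℕ) = i then (if (p1:ℕ) ≤ i then x ^ (l * (i - (p1:ℕ))) * -1 else 0)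
        else if (q1:ℕ) = i + 1 then (if (p1:ℕ) ≤ i then x ^ (l * (i - (p1:ℕ))) * x ^ l else 0) else 0) ε]
    exact keyH' x l ε p1 q1 (by omega) (by omega)
  · rw [if_neg (by intro h; exact hpq (congrArg Prod.snd h).symm),
      Finset.sum_eq_zero (fun i _ => by split_ifs <;> simp_all),
      Finset.sum_eq_zero (fun i _ => by split_ifs <;> simp_all)]
    norm_num

lemma subSL (n l ε : ℕ) (x : ℂ) :
    (x ^ (ε * l)) • (1 : Matrix (Fin (ε+1) × Fin n) (Fin (ε+1) × Fin n) ℂ)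
      - (Smat n ε l x)ᵀ * LkI n ε l x = LamI n ε l x * Q0 n ε := by
  ext ⟨p1, p2⟩ ⟨q1, q2⟩
  simp only [Matrix.sub_apply, Matrix.smul_apply, Matrix.one_apply, Matrix.mul_apply,
    Matrix.transpose_apply, Smat, LkI, LamI, Q0, Matrix.of_apply, smul_eq_mul]
  rw [Fintype.sum_prod_type]
  simp only [ite_and, ite_mul, zero_mul, mul_ite, mul_zero, mul_one]
  simp only [Finset.sum_ite_eq', Finset.sum_ite_eq, Finset.mem_univ]
  simp only [if_true]
  by_cases hpq : q2 = p2
  · subst hpq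
    simp only [if_pos rfl]
    have hR : (∑ s : Fin n,
        if q1 = (0 : Fin (ε+1)) then (if q2 = s then (if q2 = s then x ^ (l * (ε - ↑p1)) else 0) else 0) else 0)
        = if (q1:ℕ) = 0 then x ^ (l * (ε - ↑p1)) else 0 := by
      by_cases hq : q1 = (0 : Fin (ε+1))
      · rw [if_pos (by rw [hq]; rfl)]
        simp [hq, Finset.sum_ite_eq]
      · rw [if_neg (by intro h; exact hq (Fin.ext h))]
        simp [hq]
    rw [hR]
    simp only [if_true, ite_true]
    simp only [Prod.mk.injEq, and_true, Fin.ext_iff]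
    rw [Fin.sum_univ_eq_sum_range
      (fun i => if (q1:ℕ) = i then (if i < (p1:ℕ) then x ^ (l * (ε + i - (p1:ℕ))) * -1 else 0)
        else if (q1:ℕ) = i + 1 then (if i < (p1:ℕ) then x ^ (l * (ε + i - (p1:ℕ))) * x ^ l else 0) else 0) ε]
    rw [show (if (p1:ℕ) = (q1:ℕ) then x ^ (ε*l) else (0:ℂ))
        = x ^ (ε*l) * (if (p1:ℕ) = (q1:ℕ) then 1 else 0) by split_ifs <;> ring]
    exact keyG' x l ε p1 q1 (by omega) (by omega)
  · rw [if_neg (by intro h; exact hpq (congrArg Prod.snd h).symm),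
      Finset.sum_eq_zero (fun i _ => by split_ifs <;> simp_all),
      Finset.sum_eq_zero (fun i _ => by split_ifs <;> simp_all)]
    norm_num

lemma sumTwo (l : ℕ) (hl : 1 ≤ l) (x : ℂ) (c0 c1 : ℂ) :
    ∑ i ∈ Finset.range (l + 1), x ^ i * (if i = 0 then c0 else if i = l then c1 else 0)
      = c0 + x ^ l * c1 := by
  have h : ∀ i ∈ Finset.range (l+1),
      x ^ i * (if i = 0 then c0 else if i = l then c1 else 0)
      = (if i = 0 then c0 else 0) + (if i = l then x ^ l * c1 else 0) := by
    intro i _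
    split_ifs with h1 h2 <;> first | (exfalso; omega) | (subst_vars; ring)
  rw [Finset.sum_congr rfl h, Finset.sum_add_distrib]
  simp [Finset.sum_ite_eq', Finset.mem_range, Nat.lt_succ_iff, hl]

lemma LkI_split (n k l : ℕ) (x : ℂ) (p : Fin k × Fin n) (q : Fin (k+1) × Fin n) :
    LkI n k l x p q = LkI0 n k p q + x ^ l * LkI1 n k p q := by
  simp only [LkI, LkI0, LkI1, Matrix.of_apply]
  by_cases h : p.2 = q.2
  · simp only [h, if_true, true_and]
    split_ifs <;> first | (exfalso; omega) | ring
  · simp only [h, if_false, false_and, ite_false]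
    ring

lemma mpEval_Lcal (n l ε η : ℕ) (hl : 1 ≤ l)
    (M : ℕ → Matrix (Fin (η + 1) × Fin n) (Fin (ε + 1) × Fin n) ℂ) (x : ℂ) :
    mpEval l (LcalCoef n l ε η M) x
      = Matrix.fromBlocks (mpEval l M x) ((LkI n η l x)ᵀ) (LkI n ε l x) 0 := by
  ext i j
  rcases i with a | a <;> rcases j with b | b <;>
    simp only [mpEval, LcalCoef, Matrix.sum_apply, Matrix.smul_apply, smul_eq_mul,
      Matrix.fromBlocks_apply₁₁, Matrix.fromBlocks_apply₁₂, Matrix.fromBlocks_apply₂₁,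
      Matrix.fromBlocks_apply₂₂, Matrix.transpose_apply]
  · have h1 : ∀ i ∈ Finset.range (l+1),
        x ^ i * ((if i = 0 then (LkI0 n η)ᵀ else if i = l then (LkI1 n η)ᵀ else 0) a b)
        = x ^ i * (if i = 0 then (LkI0 n η)ᵀ a b else if i = l then (LkI1 n η)ᵀ a b else 0) :=
      fun i _ => by split_ifs <;> rfl
    rw [Finset.sum_congr rfl h1, sumTwo l hl x _ _]
    exact (LkI_split n η l x b a).symm
  · have h1 : ∀ i ∈ Finset.range (l+1),
        x ^ i * ((if i = 0 then LkI0 n ε else if i = l then LkI1 n ε else 0) a b)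
        = x ^ i * (if i = 0 then LkI0 n ε a b else if i = l then LkI1 n ε a b else 0) :=
      fun i _ => by split_ifs <;> rfl
    rw [Finset.sum_congr rfl h1, sumTwo l hl x _ _]
    exact (LkI_split n ε l x a b).symm
  · simp

lemma mul_Qlast (n ε : ℕ) (P : Matrix (Fin n) (Fin n) ℂ) :
    P * Qlast n ε = Matrix.of fun r (a : Fin (ε+1) × Fin n) =>
      if a.1 = Fin.last ε then P r a.2 else 0 := by
  ext r a
  simp only [Matrix.mul_apply, Qlast, Matrix.of_apply, mul_ite, mul_one, mul_zero, ite_and]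
  by_cases h : a.1 = Fin.last ε
  · simp [h, Finset.sum_ite_eq]
  · simp [h]

lemma mul_Q0 (n ε : ℕ) (P : Matrix (Fin n) (Fin n) ℂ) :
    P * Q0 n ε = Matrix.of fun r (a : Fin (ε+1) × Fin n) =>
      if a.1 = (0 : Fin (ε+1)) then P r a.2 else 0 := by
  ext r a
  simp only [Matrix.mul_apply, Q0, Matrix.of_apply, mul_ite, mul_one, mul_zero, ite_and]
  by_cases h : a.1 = (0 : Fin (ε+1))
  · simp [h, Finset.sum_ite_eq]
  · simp [h]

/-- Left-sided factorizations `H(λ; η, ε, Mᵀ)ᵀ ℒ(λ) = e_{ε+1}ᵀ ⊗ P(λ)` and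
`G(λ; η, ε, Mᵀ)ᵀ ℒ(λ) = e_1ᵀ ⊗ P(λ)`: viewing each `n × kn` product as a row of `k`
blocks of size `n × n`, in the first the `(ε+1)`-st block is `P(λ)` and all others `0`,
and in the second the first block is `P(λ)` and all others `0`. -/
theorem stmt9 (n d l ε η : ℕ) (hn : 0 < n) (hl : 1 ≤ l) (hd : d = l * (ε + η + 1))
    (A : ℕ → Matrix (Fin n) (Fin n) ℂ) (hdeg : A d ≠ 0)
    (M : ℕ → Matrix (Fin (η + 1) × Fin n) (Fin (ε + 1) × Fin n) ℂ)
    (hM : ∀ x : ℂ, (LamI n η l x)ᵀ * mpEval l M x * LamI n ε l x = mpEval d A x) :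
    (∀ x : ℂ,
        (Hmat n l η ε (fun y => (mpEval l M y)ᵀ) x)ᵀ *
            mpEval l (LcalCoef n l ε η M) x =
          Matrix.of fun r c =>
            Sum.elim
              (fun a : Fin (ε + 1) × Fin n =>
                if a.1 = Fin.last ε then mpEval d A x r a.2 else 0)
              (fun _ : Fin η × Fin n => (0 : ℂ)) c) ∧
      ∀ x : ℂ,
        (Gmat n l η ε (fun y => (mpEval l M y)ᵀ) x)ᵀ *
            mpEval l (LcalCoef n l ε η M) x =
          Matrix.of fun r c =>
            Sum.elim
              (fun a : Fin (ε + 1) × Fin n =>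
                if a.1 = (0 : Fin (ε + 1)) then mpEval d A x r a.2 else 0)
              (fun _ : Fin η × Fin n => (0 : ℂ)) c := by
  have hLcal : ∀ x : ℂ, mpEval l (LcalCoef n l ε η M) x
      = Matrix.fromBlocks (mpEval l M x) ((LkI n η l x)ᵀ) (LkI n ε l x) 0 :=
    fun x => mpEval_Lcal n l ε η hl M x
  constructor
  · intro x
    have hH : Hmat n l η ε (fun y => (mpEval l M y)ᵀ) x
        = fromRows (LamI n η l x) (Rmat n ε l x * ((mpEval l M x)ᵀ * LamI n η l x)) := by
      ext r c
      rcases r with a | a <;> rfl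
    rw [hH, hLcal x, transpose_fromRows, fromCols_mul_fromBlocks]
    have e2 : (Rmat n ε l x * ((mpEval l M x)ᵀ * LamI n η l x))ᵀ
        = (LamI n η l x)ᵀ * mpEval l M x * (Rmat n ε l x)ᵀ := by
      rw [transpose_mul, transpose_mul, transpose_transpose]
    rw [e2]
    have hcol1 : (LamI n η l x)ᵀ * mpEval l M x
          + (LamI n η l x)ᵀ * mpEval l M x * (Rmat n ε l x)ᵀ * LkI n ε l x
        = mpEval d A x * Qlast n ε := by
      rw [Matrix.mul_assoc ((LamI n η l x)ᵀ * mpEval l M x) ((Rmat n ε l x)ᵀ) (LkI n ε l x),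
        show (LamI n η l x)ᵀ * mpEval l M x
            + (LamI n η l x)ᵀ * mpEval l M x * ((Rmat n ε l x)ᵀ * LkI n ε l x)
          = (LamI n η l x)ᵀ * mpEval l M x * (1 + (Rmat n ε l x)ᵀ * LkI n ε l x) by
            rw [Matrix.mul_add, Matrix.mul_one],
        oneAddRL, ← Matrix.mul_assoc, hM x]
    have hcol2 : (LamI n η l x)ᵀ * (LkI n η l x)ᵀ
          + (LamI n η l x)ᵀ * mpEval l M x * (Rmat n ε l x)ᵀ
            * (0 : Matrix (Fin ε × Fin n) (Fin η × Fin n) ℂ) = 0 := by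
      rw [Matrix.mul_zero, add_zero, ← Matrix.transpose_mul, LkI_mul_LamI, Matrix.transpose_zero]
    rw [hcol1, hcol2, mul_Qlast]
    ext r c
    rcases c with a | a <;> simp [Matrix.fromCols]
  · intro x
    have hG : Gmat n l η ε (fun y => (mpEval l M y)ᵀ) x
        = fromRows (x ^ (ε * l) • LamI n η l x)
            (-(Smat n ε l x * ((mpEval l M x)ᵀ * LamI n η l x))) := by
      ext r c
      rcases r with a | a <;> rfl
    rw [hG, hLcal x, transpose_fromRows, transpose_smul, transpose_neg,
      fromCols_mul_fromBlocks]
    have e2 : (Smat n ε l x * ((mpEval l M x)ᵀ * LamI n η l x))ᵀ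
        = (LamI n η l x)ᵀ * mpEval l M x * (Smat n ε l x)ᵀ := by
      rw [transpose_mul, transpose_mul, transpose_transpose]
    rw [e2]
    have hcol1 : x ^ (ε * l) • (LamI n η l x)ᵀ * mpEval l M x
          + -((LamI n η l x)ᵀ * mpEval l M x * (Smat n ε l x)ᵀ) * LkI n ε l x
        = mpEval d A x * Q0 n ε := by
      rw [Matrix.smul_mul, Matrix.neg_mul,
        Matrix.mul_assoc ((LamI n η l x)ᵀ * mpEval l M x) ((Smat n ε l x)ᵀ) (LkI n ε l x)]
      have : x ^ (ε * l) • ((LamI n η l x)ᵀ * mpEval l M x)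
            + -((LamI n η l x)ᵀ * mpEval l M x * ((Smat n ε l x)ᵀ * LkI n ε l x))
          = (LamI n η l x)ᵀ * mpEval l M x
              * (x ^ (ε * l) • 1 - (Smat n ε l x)ᵀ * LkI n ε l x) := by
        rw [Matrix.mul_sub, Matrix.mul_smul, Matrix.mul_one, sub_eq_add_neg]
      rw [this, subSL, ← Matrix.mul_assoc, hM x]
    have hcol2 : x ^ (ε * l) • (LamI n η l x)ᵀ * (LkI n η l x)ᵀ
          + -((LamI n η l x)ᵀ * mpEval l M x * (Smat n ε l x)ᵀ)
            * (0 : Matrix (Fin ε × Fin n) (Fin η × Fin n) ℂ) = 0 := by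
      rw [Matrix.mul_zero, add_zero, Matrix.smul_mul, ← Matrix.transpose_mul, LkI_mul_LamI,
        Matrix.transpose_zero, smul_zero]
    rw [hcol1, hcol2, mul_Q0]
    ext r c
    rcases c with a | a <;> simp [Matrix.fromCols]


end
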